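/- Let p be prime, k ≥ 0, ℓ ≥ 1 integers with k < ℓ, and let 𝟏 denote the constant function 1 on ℤ/p^ℓℤ. Then S_𝟏(a, b; p^k; p^ℓ) = p^k · Σ_{i = max(0, k − a_p)}^{min(b_p, k)} S(a/p^{k−i}, b/p^i; p^{ℓ−k}) if k ≤ a_p + b_p, and S_𝟏(a, b; p^k; p^ℓ) = 0 otherwise, where a_p = ord_p(a), b_p = ord_p(b), and S(x, y; c) = Σ_{t t' ≡ 1 mod c} e((xt + yt')/c) is the classical Kloosterman sum. -/

import Mathlib

open Finset

instance neZeroOfFactPrime (p : ℕ) [hp : Fact p.Prime] : NeZero p := ⟨hp.out.ne_zero⟩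

instance neZeroPowNat {p : ℕ} [NeZero p] (n : ℕ) : NeZero (p ^ n) :=
  ⟨pow_ne_zero n (NeZero.ne p)⟩

/-- The generalized Kloosterman sum with trivial character:
`S_𝟏(a,b;n;c) = ∑_{x x' = n in ℤ/cℤ} e((a x + b x')/c)`. -/
noncomputable def klSumOne (c : ℕ) [NeZero c] (a b n : ℤ) : ℂ :=
  ∑ x : ZMod c, ∑ x' : ZMod c,
    if x * x' = (n : ZMod c) then
      Complex.exp (2 * Real.pi * Complex.I * ((a : ℂ) * x.val + (b : ℂ) * x'.val) / c)
    else 0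

/-- The classical Kloosterman sum `S(x,y;c) = ∑_{t t' ≡ 1 mod c} e((x t + y t')/c)`. -/
noncomputable def kloos (c : ℕ) [NeZero c] (x y : ℤ) : ℂ :=
  ∑ t : (ZMod c)ˣ,
    Complex.exp (2 * Real.pi * Complex.I *
      ((x : ℂ) * ((t : ZMod c).val : ℂ) + (y : ℂ) * (((t⁻¹ : (ZMod c)ˣ) : ZMod c).val : ℂ))
      / c)


noncomputable def eC (M : ℕ) (c : ℤ) : ℂ :=
  Complex.exp (2 * Real.pi * Complex.I * c / M)

lemma eC_add (M : ℕ) (c d : ℤ) : eC M (c + d) = eC M c * eC M d := by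
  rw [eC, eC, eC, ← Complex.exp_add]
  congr 1
  rw [← add_div]
  push_cast
  ring

lemma eC_intMul (M : ℕ) (hM : M ≠ 0) (z : ℤ) : eC M ((M : ℤ) * z) = 1 := by
  rw [eC]
  have hM' : (M : ℂ) ≠ 0 := Nat.cast_ne_zero.mpr hM
  have : 2 * (Real.pi : ℂ) * Complex.I * ((M : ℤ) * z : ℤ) / M
      = (z : ℤ) * (2 * Real.pi * Complex.I) := by
    push_cast
    field_simp
  rw [this, Complex.exp_int_mul_two_pi_mul_I]

lemma eC_congr (M : ℕ) (hM : M ≠ 0) {c d : ℤ} (h : (M : ℤ) ∣ c - d) :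
    eC M c = eC M d := by
  obtain ⟨z, hz⟩ := h
  have : c = d + M * z := by linarith
  rw [this, eC_add, eC_intMul M hM, mul_one]

lemma eC_scale (p : ℕ) (hp : p ≠ 0) {i ℓ : ℕ} (h : i ≤ ℓ) (c : ℤ) :
    eC (p ^ ℓ) ((p : ℤ) ^ i * c) = eC (p ^ (ℓ - i)) c := by
  rw [eC, eC]
  congr 1
  have hpc : (p : ℂ) ≠ 0 := Nat.cast_ne_zero.mpr hp
  have h1 : (p : ℂ) ^ ℓ = (p : ℂ) ^ (ℓ - i) * (p : ℂ) ^ i := by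
    rw [← pow_add]; congr 1; omega
  push_cast
  rw [h1]
  field_simp

lemma eC_pow (M : ℕ) (c : ℤ) (n : ℕ) : eC M (c * n) = eC M c ^ n := by
  rw [eC, eC, ← Complex.exp_nat_mul]
  congr 1
  push_cast
  ring

lemma sum_zmod_val {β : Type*} [AddCommMonoid β] (M : ℕ) [NeZero M] (f : ℕ → β) :
    ∑ x : ZMod M, f x.val = ∑ n ∈ range M, f n := by
  cases M with
  | zero => exact absurd rfl (NeZero.ne 0)
  | succ N => exact Fin.sum_univ_eq_sum_range (fun i => f i) (N + 1)

lemma eC_eq_one_iff (M : ℕ) (hM : M ≠ 0) (c : ℤ) : eC M c = 1 ↔ (M : ℤ) ∣ c := by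
  constructor
  · intro hEq
    rw [eC, Complex.exp_eq_one_iff] at hEq
    obtain ⟨n, hn⟩ := hEq
    have hM' : (M : ℂ) ≠ 0 := Nat.cast_ne_zero.mpr hM
    have h2 : (2 * (Real.pi : ℂ) * Complex.I) ≠ 0 := by
      simp [Real.pi_ne_zero, Complex.I_ne_zero]
    have hc' : (2 * (Real.pi : ℂ) * Complex.I) * (c : ℂ)
        = (2 * (Real.pi : ℂ) * Complex.I) * ((n : ℂ) * M) := by
      field_simp at hn
      linear_combination (2 * (Real.pi : ℂ) * Complex.I) * hn
    have hc : (c : ℂ) = n * M := mul_left_cancel₀ h2 hc'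
    refine ⟨n, ?_⟩
    have : c = n * M := by exact_mod_cast hc
    rw [this]; ring
  · rintro ⟨z, rfl⟩
    exact eC_intMul M hM z

lemma sum_eC (M : ℕ) [NeZero M] (c : ℤ) :
    ∑ x : ZMod M, eC M (c * x.val) = if (M : ℤ) ∣ c then (M : ℂ) else 0 := by
  have hM : M ≠ 0 := NeZero.ne M
  rw [sum_zmod_val M (fun n => eC M (c * (n : ℤ)))]
  by_cases h : (M : ℤ) ∣ c
  · rw [if_pos h]
    obtain ⟨z, rfl⟩ := h
    have hone : ∀ n ∈ range M, eC M ((M : ℤ) * z * n) = 1 := by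
      intro n _
      rw [show ((M : ℤ) * z * n : ℤ) = (M : ℤ) * (z * n) by ring, eC_intMul M hM]
    rw [Finset.sum_congr rfl hone]
    simp
  · rw [if_neg h]
    have hne : eC M c ≠ 1 := fun hEq => h ((eC_eq_one_iff M hM c).mp hEq)
    calc ∑ n ∈ range M, eC M (c * n)
        = ∑ n ∈ range M, eC M c ^ n := Finset.sum_congr rfl fun n _ => eC_pow M c n
      _ = (eC M c ^ M - 1) / (eC M c - 1) := geom_sum_eq hne M
      _ = 0 := by
          rw [← eC_pow, show (c * M : ℤ) = M * c by ring, eC_intMul M hM]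
          simp

section UnitReduction

variable (p : ℕ) [hp : Fact p.Prime]

lemma not_dvd_unit_val {P : ℕ} (hP : P ≠ 0) (u : (ZMod (p ^ P))ˣ) :
    ¬ p ∣ ((u : ZMod (p ^ P)).val) := by
  intro hdvd
  have hco := ZMod.val_coe_unit_coprime u
  have h1 : p ∣ Nat.gcd ((u : ZMod (p ^ P)).val) (p ^ P) :=
    Nat.dvd_gcd hdvd (dvd_pow_self p hP)
  rw [Nat.Coprime] at hco
  rw [hco] at h1
  exact absurd (Nat.dvd_one.mp h1) hp.out.one_lt.ne'

lemma isUnit_cast {n : ℕ} (hn : ¬ p ∣ n) (Q : ℕ) : IsUnit ((n : ℕ) : ZMod (p ^ Q)) := by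
  rw [ZMod.isUnit_iff_coprime]
  exact Nat.Coprime.pow_right Q ((hp.out.coprime_iff_not_dvd.mpr hn).symm)

lemma unit_reduction (m d : ℕ) (hdm : d < m) (a' c : ℤ) :
    ∑ u : (ZMod (p ^ m))ˣ, eC (p ^ m) (a' * (((u : ZMod (p ^ m)).val : ℕ) : ℤ)
        + c * (p : ℤ) ^ d * ((((u⁻¹ : (ZMod (p ^ m))ˣ) : ZMod (p ^ m)).val : ℕ) : ℤ))
    = if (p : ℤ) ^ d ∣ a' then
        (p : ℂ) ^ d * ∑ v : (ZMod (p ^ (m - d)))ˣ,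
          eC (p ^ (m - d)) ((a' / (p : ℤ) ^ d) * (((v : ZMod (p ^ (m - d))).val : ℕ) : ℤ)
            + c * ((((v⁻¹ : (ZMod (p ^ (m - d)))ˣ) : ZMod (p ^ (m - d))).val : ℕ) : ℤ))
      else 0 := by
  have pp := hp.out
  have hp0 : p ≠ 0 := pp.ne_zero
  have hp1 : 1 < p := pp.one_lt
  set P : ℕ := p ^ (m - d) with hPdef
  have hPm : P * p ^ d = p ^ m := by rw [hPdef, ← pow_add]; congr 1; omega
  -- the parametrizing map
  set N : (ZMod P)ˣ × ZMod (p ^ d) → ℕ :=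
    fun vs => (vs.1 : ZMod P).val + P * vs.2.val with hNdef
  have hNlt : ∀ vs, N vs < p ^ m := by
    intro vs
    have h1 : (vs.1 : ZMod P).val < P := ZMod.val_lt _
    have h2 : vs.2.val < p ^ d := ZMod.val_lt _
    have : N vs < P * p ^ d := by
      rw [hNdef]
      nlinarith
    omega
  have hNunit : ∀ vs, IsUnit ((N vs : ℕ) : ZMod (p ^ m)) := by
    intro vs
    refine isUnit_cast p ?_ m
    intro hdvd
    have hPp : p ∣ P := dvd_pow_self p (by omega : m - d ≠ 0)
    have : p ∣ (vs.1 : ZMod P).val := by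
      rcases hdvd with ⟨w, hw⟩
      rcases hPp with ⟨w', hw'⟩
      refine ⟨w - w' * vs.2.val, ?_⟩
      rw [hNdef] at hw
      simp only at hw
      have hx : P * vs.2.val = (p * w') * vs.2.val := by rw [← hw']
      have hx2 : (p * w') * vs.2.val = p * (w' * vs.2.val) := by ring
      rw [Nat.mul_sub]
      omega
    exact not_dvd_unit_val p (by omega : m - d ≠ 0) vs.1 this
  set B : (ZMod P)ˣ × ZMod (p ^ d) → (ZMod (p ^ m))ˣ := fun vs => (hNunit vs).unit with hBdef
  have hBval : ∀ vs, ((B vs : ZMod (p ^ m)).val) = N vs := by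
    intro vs
    rw [hBdef]
    simp only [IsUnit.unit_spec]
    exact ZMod.val_cast_of_lt (hNlt vs)
  have hBbij : Function.Bijective B := by
    rw [Fintype.bijective_iff_injective_and_card]
    constructor
    · intro vs vs' hEq
      have hN : N vs = N vs' := by
        rw [← hBval vs, ← hBval vs', hEq]
      have h1 : (vs.1 : ZMod P).val < P := ZMod.val_lt _
      have h1' : (vs'.1 : ZMod P).val < P := ZMod.val_lt _
      have hv : (vs.1 : ZMod P).val = (vs'.1 : ZMod P).val := by
        have e1 := Nat.add_mul_mod_self_left ((vs.1 : ZMod P).val) P (vs.2.val)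
        have e2 := Nat.add_mul_mod_self_left ((vs'.1 : ZMod P).val) P (vs'.2.val)
        rw [hNdef] at hN
        simp only at hN
        rw [← Nat.mod_eq_of_lt h1, ← Nat.mod_eq_of_lt h1', ← e1, ← e2, hN]
      have hs : vs.2.val = vs'.2.val := by
        rw [hNdef] at hN
        simp only at hN
        have hPpos : 0 < P := Nat.pow_pos (by omega)
        nlinarith [hN, hv]
      have : vs.1 = vs'.1 := Units.ext (ZMod.val_injective _ hv)
      have h2 : vs.2 = vs'.2 := ZMod.val_injective _ hs
      exact Prod.ext this h2
    · rw [Fintype.card_prod, ZMod.card_units_eq_totient, ZMod.card_units_eq_totient,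
        ZMod.card]
      rw [Nat.totient_prime_pow pp (by omega : 0 < m - d),
        Nat.totient_prime_pow pp (by omega : 0 < m)]
      rw [show p ^ (m - d - 1) * (p - 1) * p ^ d = p ^ (m - d - 1) * p ^ d * (p - 1) by ring,
        ← pow_add, show m - d - 1 + d = m - 1 by omega]
  -- reduction map on units
  have hdvdPm : P ∣ p ^ m := ⟨p ^ d, hPm.symm⟩
  set π : ZMod (p ^ m) →+* ZMod P := ZMod.castHom hdvdPm (ZMod P) with hπdef
  have hmapB : ∀ vs, Units.map (π : ZMod (p ^ m) →* ZMod P) (B vs) = vs.1 := by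
    intro vs
    apply Units.ext
    rw [Units.coe_map]
    show π ((B vs : ZMod (p ^ m))) = (vs.1 : ZMod P)
    rw [hBdef]
    simp only [IsUnit.unit_spec]
    rw [map_natCast, hNdef]
    push_cast
    simp [ZMod.natCast_val, ZMod.cast_id, ZMod.natCast_self]
  have hinv : ∀ vs, (P : ℤ) ∣
      (((((B vs)⁻¹ : (ZMod (p ^ m))ˣ) : ZMod (p ^ m)).val : ℕ) : ℤ)
        - (((((vs.1⁻¹ : (ZMod P)ˣ) : ZMod P).val : ℕ)) : ℤ) := by
    intro vs
    have h1 : Units.map (π : ZMod (p ^ m) →* ZMod P) ((B vs)⁻¹) = vs.1⁻¹ := by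
      rw [map_inv, hmapB]
    have h2 := congrArg (Units.val) h1
    rw [Units.coe_map] at h2
    have h3 : (((((B vs)⁻¹ : (ZMod (p ^ m))ˣ) : ZMod (p ^ m)).val : ℕ) : ZMod P)
        = (((((vs.1⁻¹ : (ZMod P)ˣ) : ZMod P)).val : ℕ) : ZMod P) := by
      rw [ZMod.natCast_val, ZMod.natCast_val, ZMod.cast_id]
      rw [← ZMod.castHom_apply (h := hdvdPm)]
      exact h2
    rw [ZMod.natCast_eq_natCast_iff] at h3
    exact Nat.ModEq.dvd h3.symm
  have hPmZ : ((p : ℤ) ^ (m - d)) * (p : ℤ) ^ d = (p : ℤ) ^ m := by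
    exact_mod_cast congrArg (Nat.cast : ℕ → ℤ) hPm
  have hterm : ∀ vs,
      eC (p ^ m) (a' * (((B vs : ZMod (p ^ m)).val : ℕ) : ℤ)
        + c * (p : ℤ) ^ d * (((((B vs)⁻¹ : (ZMod (p ^ m))ˣ) : ZMod (p ^ m)).val : ℕ) : ℤ))
      = (eC (p ^ m) (a' * (((vs.1 : ZMod P).val : ℕ) : ℤ))
          * eC P (c * ((((vs.1⁻¹ : (ZMod P)ˣ) : ZMod P).val : ℕ) : ℤ)))
        * eC (p ^ d) (a' * ((vs.2.val : ℕ) : ℤ)) := by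
    intro vs
    have hPcast : ((P : ℕ) : ℤ) = (p : ℤ) ^ (m - d) := by
      rw [hPdef]; push_cast; ring
    have hF1 : eC (p ^ m) (a' * (((B vs : ZMod (p ^ m)).val : ℕ) : ℤ))
        = eC (p ^ m) (a' * (((vs.1 : ZMod P).val : ℕ) : ℤ))
          * eC (p ^ d) (a' * ((vs.2.val : ℕ) : ℤ)) := by
      rw [hBval vs]
      have hNint : a' * ((N vs : ℕ) : ℤ) = a' * ((vs.1 : ZMod P).val : ℤ)
          + (p : ℤ) ^ (m - d) * (a' * (vs.2.val : ℤ)) := by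
        rw [hNdef]
        push_cast [← hPcast]
        ring
      rw [hNint, eC_add, eC_scale p hp0 (Nat.sub_le m d),
        show m - (m - d) = d from by omega]
    have hF2 : eC (p ^ m) (c * (p : ℤ) ^ d
          * (((((B vs)⁻¹ : (ZMod (p ^ m))ˣ) : ZMod (p ^ m)).val : ℕ) : ℤ))
        = eC P (c * ((((vs.1⁻¹ : (ZMod P)ˣ) : ZMod P).val : ℕ) : ℤ)) := by
      obtain ⟨w, hw⟩ := hinv vs
      have hcong : ((p ^ m : ℕ) : ℤ) ∣
          (c * (p : ℤ) ^ d * (((((B vs)⁻¹ : (ZMod (p ^ m))ˣ) : ZMod (p ^ m)).val : ℕ) : ℤ)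
            - (p : ℤ) ^ d * (c * ((((vs.1⁻¹ : (ZMod P)ˣ) : ZMod P).val : ℕ) : ℤ))) := by
        refine ⟨c * w, ?_⟩
        rw [hPcast] at hw
        push_cast
        linear_combination (p : ℤ) ^ d * c * hw + c * w * hPmZ
      rw [eC_congr (p ^ m) (pow_ne_zero m hp0) hcong]
      exact eC_scale p hp0 (Nat.le_of_lt hdm) _
    rw [eC_add, hF1, hF2]
    ring
  have hsum1 : ∑ u : (ZMod (p ^ m))ˣ, eC (p ^ m) (a' * (((u : ZMod (p ^ m)).val : ℕ) : ℤ)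
        + c * (p : ℤ) ^ d * ((((u⁻¹ : (ZMod (p ^ m))ˣ) : ZMod (p ^ m)).val : ℕ) : ℤ))
      = ∑ vs : (ZMod P)ˣ × ZMod (p ^ d),
          (eC (p ^ m) (a' * (((vs.1 : ZMod P).val : ℕ) : ℤ))
            * eC P (c * ((((vs.1⁻¹ : (ZMod P)ˣ) : ZMod P).val : ℕ) : ℤ)))
          * eC (p ^ d) (a' * ((vs.2.val : ℕ) : ℤ)) :=
    (Fintype.sum_bijective B hBbij _ _ (fun vs => (hterm vs).symm)).symm
  rw [hsum1, Fintype.sum_prod_type]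
  have hstep : ∀ v : (ZMod P)ˣ, ∑ s : ZMod (p ^ d),
      (eC (p ^ m) (a' * (((v : ZMod P).val : ℕ) : ℤ))
        * eC P (c * ((((v⁻¹ : (ZMod P)ˣ) : ZMod P).val : ℕ) : ℤ)))
      * eC (p ^ d) (a' * ((s.val : ℕ) : ℤ))
      = (eC (p ^ m) (a' * (((v : ZMod P).val : ℕ) : ℤ))
          * eC P (c * ((((v⁻¹ : (ZMod P)ˣ) : ZMod P).val : ℕ) : ℤ)))
        * (if ((p ^ d : ℕ) : ℤ) ∣ a' then ((p ^ d : ℕ) : ℂ) else 0) := by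
    intro v
    rw [← Finset.mul_sum, sum_eC]
  rw [Finset.sum_congr rfl (fun v _ => hstep v), ← Finset.sum_mul]
  have hcastdvd : (((p ^ d : ℕ) : ℤ) ∣ a') ↔ ((p : ℤ) ^ d ∣ a') := by push_cast; rfl
  by_cases hda : (p : ℤ) ^ d ∣ a'
  · rw [if_pos (hcastdvd.mpr hda), if_pos hda, mul_comm]
    congr 1
    · push_cast; ring
    · refine Finset.sum_congr rfl (fun v _ => ?_)
      have ha2 : (p : ℤ) ^ d * (a' / (p : ℤ) ^ d) = a' := Int.mul_ediv_cancel' hda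
      have h1 : eC (p ^ m) (a' * (((v : ZMod P).val : ℕ) : ℤ))
          = eC P ((a' / (p : ℤ) ^ d) * (((v : ZMod P).val : ℕ) : ℤ)) := by
        rw [show a' * (((v : ZMod P).val : ℕ) : ℤ)
            = (p : ℤ) ^ d * ((a' / (p : ℤ) ^ d) * (((v : ZMod P).val : ℕ) : ℤ)) from by
          linear_combination (((v : ZMod P).val : ℕ) : ℤ) * ha2.symm]
        exact eC_scale p hp0 (Nat.le_of_lt hdm) _
      rw [h1, ← eC_add]
  · rw [if_neg (fun hx => hda (hcastdvd.mp hx)), if_neg hda, mul_zero]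

end UnitReduction

section Main

variable (p : ℕ) [hp : Fact p.Prime]

/-- The parametrization of solutions of `x x' = p^k` in `ZMod (p^ℓ)` with `v_p(x) = i`. -/
def Phi (ℓ k i : ℕ) (u : (ZMod (p ^ (ℓ - i)))ˣ) (t : ZMod (p ^ i)) :
    ZMod (p ^ ℓ) × ZMod (p ^ ℓ) :=
  (((p ^ i * (u : ZMod (p ^ (ℓ - i))).val : ℕ) : ZMod (p ^ ℓ)),
   ((p ^ (k - i) * ((u⁻¹ : (ZMod (p ^ (ℓ - i)))ˣ) : ZMod (p ^ (ℓ - i))).val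
      + p ^ (ℓ - i) * t.val : ℕ) : ZMod (p ^ ℓ)))

lemma val_mul_inv (Q : ℕ) [NeZero Q] (u : (ZMod Q)ˣ) :
    (Q : ℤ) ∣ (((u : ZMod Q).val : ℤ) * (((u⁻¹ : (ZMod Q)ˣ) : ZMod Q).val : ℤ)) - 1 := by
  have h1 : ((u : ZMod Q) * ((u⁻¹ : (ZMod Q)ˣ) : ZMod Q) : ZMod Q) = 1 := by
    rw [← Units.val_mul, mul_inv_cancel, Units.val_one]
  have h2 : ((((u : ZMod Q).val * ((u⁻¹ : (ZMod Q)ˣ) : ZMod Q).val : ℕ)) : ZMod Q)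
      = ((1 : ℕ) : ZMod Q) := by
    push_cast
    rw [ZMod.natCast_val, ZMod.natCast_val, ZMod.cast_id, ZMod.cast_id, h1]
  rw [ZMod.natCast_eq_natCast_iff] at h2
  have h3 := Nat.ModEq.dvd h2
  push_cast at h3
  exact dvd_sub_comm.mp h3

lemma phi_mul (ℓ k i : ℕ) (hik : i ≤ k) (hkℓ : k < ℓ)
    (u : (ZMod (p ^ (ℓ - i)))ˣ) (t : ZMod (p ^ i)) :
    (Phi p ℓ k i u t).1 * (Phi p ℓ k i u t).2 = ((p ^ k : ℕ) : ZMod (p ^ ℓ)) := by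
  have pp := hp.out
  rw [Phi]
  rw [← Nat.cast_mul, ZMod.natCast_eq_natCast_iff, Nat.modEq_iff_dvd]
  obtain ⟨w, hw⟩ := val_mul_inv (p ^ (ℓ - i)) u
  have hwc : ((p ^ (ℓ - i) : ℕ) : ℤ) = (p : ℤ) ^ (ℓ - i) := by push_cast; ring
  rw [hwc] at hw
  have E1 : (p : ℤ) ^ i * (p : ℤ) ^ (k - i) = (p : ℤ) ^ k := by
    rw [← pow_add]; congr 1; omega
  have E2 : (p : ℤ) ^ i * (p : ℤ) ^ (ℓ - i) = (p : ℤ) ^ ℓ := by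
    rw [← pow_add]; congr 1; omega
  have E3 : (p : ℤ) ^ k * (p : ℤ) ^ (ℓ - i) = (p : ℤ) ^ ℓ * (p : ℤ) ^ (k - i) := by
    rw [← pow_add, ← pow_add]; congr 1; omega
  refine ⟨-((p : ℤ) ^ (k - i) * w
    + ((u : ZMod (p ^ (ℓ - i))).val : ℤ) * (t.val : ℤ)), ?_⟩
  push_cast
  linear_combination
    (-(((u : ZMod (p ^ (ℓ - i))).val : ℤ)
        * (((u⁻¹ : (ZMod (p ^ (ℓ - i)))ˣ) : ZMod (p ^ (ℓ - i))).val : ℤ))) * E1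
    + (-(((u : ZMod (p ^ (ℓ - i))).val : ℤ) * (t.val : ℤ))) * E2
    + (-w) * E3 + (-(p : ℤ) ^ k) * hw

lemma phi_fst_val (ℓ k i : ℕ) (hiℓ : i ≤ ℓ) (u : (ZMod (p ^ (ℓ - i)))ˣ) (t : ZMod (p ^ i)) :
    ((Phi p ℓ k i u t).1).val = p ^ i * (u : ZMod (p ^ (ℓ - i))).val := by
  rw [Phi]
  apply ZMod.val_cast_of_lt
  have h1 : (u : ZMod (p ^ (ℓ - i))).val < p ^ (ℓ - i) := ZMod.val_lt _
  have h2 : 0 < p ^ i := Nat.pow_pos hp.out.pos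
  calc p ^ i * (u : ZMod (p ^ (ℓ - i))).val < p ^ i * p ^ (ℓ - i) :=
        mul_lt_mul_of_pos_left h1 h2
    _ = p ^ ℓ := by rw [← pow_add]; congr 1; omega

lemma phi_inj (ℓ k i : ℕ) (hik : i ≤ k) (hkℓ : k < ℓ) :
    Function.Injective (fun ut : (ZMod (p ^ (ℓ - i)))ˣ × ZMod (p ^ i) =>
      Phi p ℓ k i ut.1 ut.2) := by
  have pp := hp.out
  rintro ⟨u, t⟩ ⟨u', t'⟩ hEq
  have h1 := congrArg Prod.fst hEq
  have h2 := congrArg Prod.snd hEq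
  simp only at h1 h2
  have hv1 := congrArg ZMod.val h1
  rw [phi_fst_val p ℓ k i (by omega), phi_fst_val p ℓ k i (by omega)] at hv1
  have hu : u = u' := by
    apply Units.ext
    apply ZMod.val_injective
    have hpi : 0 < p ^ i := Nat.pow_pos pp.pos
    exact Nat.eq_of_mul_eq_mul_left hpi hv1
  subst hu
  rw [Phi, Phi] at h2
  simp only at h2
  rw [ZMod.natCast_eq_natCast_iff] at h2
  have h3 := Nat.ModEq.add_left_cancel' _ h2
  have hb : ∀ s : ZMod (p ^ i), p ^ (ℓ - i) * s.val < p ^ ℓ := by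
    intro s
    have h1s : s.val < p ^ i := ZMod.val_lt _
    have h2s : 0 < p ^ (ℓ - i) := Nat.pow_pos pp.pos
    calc p ^ (ℓ - i) * s.val < p ^ (ℓ - i) * p ^ i := mul_lt_mul_of_pos_left h1s h2s
      _ = p ^ ℓ := by rw [← pow_add]; congr 1; omega
  have h4 : p ^ (ℓ - i) * t.val = p ^ (ℓ - i) * t'.val :=
    Nat.ModEq.eq_of_lt_of_lt h3 (hb t) (hb t')
  have ht : t = t' := by
    apply ZMod.val_injective
    exact Nat.eq_of_mul_eq_mul_left (Nat.pow_pos pp.pos) h4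
  rw [ht]

lemma phi_fst_ne (ℓ k : ℕ) (hkℓ : k < ℓ) {i j : ℕ} (hik : i ≤ k) (hjk : j ≤ k)
    (hij : i ≠ j) (u : (ZMod (p ^ (ℓ - i)))ˣ) (t : ZMod (p ^ i))
    (u' : (ZMod (p ^ (ℓ - j)))ˣ) (t' : ZMod (p ^ j)) :
    Phi p ℓ k i u t ≠ Phi p ℓ k j u' t' := by
  have pp := hp.out
  intro hEq
  have hv := congrArg ZMod.val (congrArg Prod.fst hEq)
  rw [phi_fst_val p ℓ k i (by omega), phi_fst_val p ℓ k j (by omega)] at hv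
  have hcase : ∀ i' j' : ℕ, i' < j' → j' ≤ k →
      ∀ (a b : ℕ), ¬ p ∣ a → p ^ i' * a = p ^ j' * b → False := by
    intro i' j' hij' hj'k a b hnd hEq'
    have : p ^ i' * a = p ^ i' * (p ^ (j' - i') * b) := by
      rw [hEq', ← mul_assoc, ← pow_add]
      congr 2
      omega
    have ha : a = p ^ (j' - i') * b :=
      Nat.eq_of_mul_eq_mul_left (Nat.pow_pos pp.pos) this
    apply hnd
    rw [ha]
    exact Dvd.dvd.mul_right (dvd_pow_self p (by omega : j' - i' ≠ 0)) b
  rcases Nat.lt_or_ge i j with hlt | hge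
  · exact hcase i j hlt hjk _ _ (not_dvd_unit_val p (by omega : ℓ - i ≠ 0) u) hv
  · have hlt : j < i := by omega
    exact hcase j i hlt hik _ _ (not_dvd_unit_val p (by omega : ℓ - j ≠ 0) u') hv.symm

lemma phi_cover (ℓ k : ℕ) (hkℓ : k < ℓ) (z : ZMod (p ^ ℓ) × ZMod (p ^ ℓ))
    (hz : z.1 * z.2 = ((p ^ k : ℕ) : ZMod (p ^ ℓ))) :
    ∃ i, i ≤ k ∧ ∃ (u : (ZMod (p ^ (ℓ - i)))ˣ) (t : ZMod (p ^ i)),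
      Phi p ℓ k i u t = z := by
  have pp := hp.out
  have hp0 : p ≠ 0 := pp.ne_zero
  have hp1 : 1 < p := pp.one_lt
  -- key integer congruence
  have hkey : ((p ^ ℓ : ℕ) : ℤ) ∣ ((z.1.val : ℤ) * (z.2.val : ℤ) - ((p ^ k : ℕ) : ℤ)) := by
    have hc : ((z.1.val * z.2.val : ℕ) : ZMod (p ^ ℓ)) = ((p ^ k : ℕ) : ZMod (p ^ ℓ)) := by
      push_cast
      rw [ZMod.natCast_val, ZMod.natCast_val, ZMod.cast_id, ZMod.cast_id]
      exact_mod_cast hz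
    rw [ZMod.natCast_eq_natCast_iff, Nat.modEq_iff_dvd] at hc
    have := dvd_sub_comm.mp hc
    push_cast at this ⊢
    exact this
  set n := z.1.val with hndef
  have hn0 : n ≠ 0 := by
    intro h0
    have hz1 : z.1 = 0 := by
      rw [← ZMod.val_eq_zero]
      exact h0
    rw [hz1, zero_mul] at hz
    have : p ^ ℓ ∣ p ^ k := (ZMod.natCast_eq_zero_iff _ _).mp hz.symm
    have := (Nat.pow_dvd_pow_iff_le_right hp1).mp this
    omega
  set i := padicValNat p n with hidef
  have hdvd : p ^ i ∣ n := pow_padicValNat_dvd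
  set m' := n / p ^ i with hmdef
  have hnm : n = p ^ i * m' := (Nat.mul_div_cancel' hdvd).symm
  have hpm : ¬ p ∣ m' := by
    have h := Nat.not_dvd_ordCompl pp hn0
    rwa [Nat.factorization_def n pp] at h
  have hik : i ≤ k := by
    by_contra hgt
    push_neg at hgt
    have h1 : (p : ℤ) ^ (k + 1) ∣ (n : ℤ) := by
      have : p ^ (k + 1) ∣ n := dvd_trans (pow_dvd_pow p hgt) hdvd
      exact_mod_cast Int.natCast_dvd_natCast.mpr this
    have h2 : (p : ℤ) ^ (k + 1) ∣ ((p ^ ℓ : ℕ) : ℤ) := by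
      push_cast
      exact pow_dvd_pow _ (by omega)
    have h3 : (p : ℤ) ^ (k + 1) ∣ ((p ^ k : ℕ) : ℤ) := by
      have h4 : (p : ℤ) ^ (k + 1) ∣ ((z.1.val : ℤ) * (z.2.val : ℤ) - ((p ^ k : ℕ) : ℤ)) :=
        dvd_trans h2 hkey
      have h5 : (p : ℤ) ^ (k + 1) ∣ (z.1.val : ℤ) * (z.2.val : ℤ) :=
        Dvd.dvd.mul_right h1 _
      have h7 := dvd_sub h5 h4
      simpa using h7
    have h6 : p ^ (k + 1) ∣ p ^ k := by exact_mod_cast h3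
    have := (Nat.pow_dvd_pow_iff_le_right hp1).mp h6
    omega
  have hmlt : m' < p ^ (ℓ - i) := by
    have hnlt : n < p ^ ℓ := ZMod.val_lt z.1
    by_contra hge
    push_neg at hge
    have : p ^ i * p ^ (ℓ - i) ≤ p ^ i * m' := Nat.mul_le_mul_left _ hge
    rw [← pow_add] at this
    have heq : i + (ℓ - i) = ℓ := by omega
    rw [heq] at this
    omega
  have hu : IsUnit ((m' : ℕ) : ZMod (p ^ (ℓ - i))) := isUnit_cast p hpm _
  set u : (ZMod (p ^ (ℓ - i)))ˣ := hu.unit with hudef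
  have huval : (u : ZMod (p ^ (ℓ - i))).val = m' := by
    rw [hudef, IsUnit.unit_spec]
    exact ZMod.val_cast_of_lt hmlt
  set V := ((u⁻¹ : (ZMod (p ^ (ℓ - i)))ˣ) : ZMod (p ^ (ℓ - i))).val with hVdef
  -- divisibility giving existence of t
  have hD : ((p : ℤ) ^ (ℓ - i)) ∣ ((z.2.val : ℤ) - (p : ℤ) ^ (k - i) * (V : ℤ)) := by
    have hstep1 : ((p : ℤ) ^ (ℓ - i)) ∣ ((m' : ℤ) * (z.2.val : ℤ) - (p : ℤ) ^ (k - i)) := by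
      have E1 : (p : ℤ) ^ i * (p : ℤ) ^ (k - i) = (p : ℤ) ^ k := by
        rw [← pow_add]; congr 1; omega
      have E2 : (p : ℤ) ^ i * (p : ℤ) ^ (ℓ - i) = (p : ℤ) ^ ℓ := by
        rw [← pow_add]; congr 1; omega
      have hki : ((n : ℤ) * (z.2.val : ℤ) - ((p ^ k : ℕ) : ℤ))
          = (p : ℤ) ^ i * ((m' : ℤ) * (z.2.val : ℤ) - (p : ℤ) ^ (k - i)) := by
        have hnmZ : (n : ℤ) = (p : ℤ) ^ i * (m' : ℤ) := by exact_mod_cast hnm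
        push_cast
        rw [hnmZ]
        linear_combination E1
      have hkey2 : ((p : ℤ) ^ i * (p : ℤ) ^ (ℓ - i)) ∣
          ((p : ℤ) ^ i * ((m' : ℤ) * (z.2.val : ℤ) - (p : ℤ) ^ (k - i))) := by
        rw [E2, ← hki]
        have : ((p ^ ℓ : ℕ) : ℤ) = (p : ℤ) ^ ℓ := by push_cast; ring
        rw [← this]
        exact hkey
      exact (mul_dvd_mul_iff_left (pow_ne_zero i (by exact_mod_cast hp0 : (p : ℤ) ≠ 0))).mp hkey2
    have hMV : ((p : ℤ) ^ (ℓ - i)) ∣ ((m' : ℤ) * (V : ℤ) - 1) := by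
      have := val_mul_inv (p ^ (ℓ - i)) u
      rw [huval] at this
      push_cast at this ⊢
      exact this
    obtain ⟨w1, hw1⟩ := hstep1
    obtain ⟨w2, hw2⟩ := hMV
    refine ⟨(V : ℤ) * w1 - (z.2.val : ℤ) * w2, ?_⟩
    linear_combination (V : ℤ) * hw1 - (z.2.val : ℤ) * hw2
  set w : ℤ := ((z.2.val : ℤ) - (p : ℤ) ^ (k - i) * (V : ℤ)) / (p : ℤ) ^ (ℓ - i) with hwdef
  have hwmul : (p : ℤ) ^ (ℓ - i) * w = (z.2.val : ℤ) - (p : ℤ) ^ (k - i) * (V : ℤ) :=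
    Int.mul_ediv_cancel' hD
  refine ⟨i, hik, u, ((w : ℤ) : ZMod (p ^ i)), ?_⟩
  apply Prod.ext
  · show ((p ^ i * (u : ZMod (p ^ (ℓ - i))).val : ℕ) : ZMod (p ^ ℓ)) = z.1
    rw [huval, ← hnm, hndef]
    rw [ZMod.natCast_val, ZMod.cast_id]
  · show ((p ^ (k - i) * V + p ^ (ℓ - i) * ((w : ZMod (p ^ i))).val : ℕ) : ZMod (p ^ ℓ)) = z.2
    have htv : ((((w : ZMod (p ^ i))).val : ℤ)) = w % (p : ℤ) ^ i := by
      have := ZMod.val_intCast (n := p ^ i) w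
      push_cast at this ⊢
      exact this
    have hgoal : ((p ^ ℓ : ℕ) : ℤ) ∣
        ((z.2.val : ℤ) - ((p ^ (k - i) * V + p ^ (ℓ - i) * ((w : ZMod (p ^ i))).val : ℕ) : ℤ)) := by
      have E2 : (p : ℤ) ^ (ℓ - i) * (p : ℤ) ^ i = (p : ℤ) ^ ℓ := by
        rw [← pow_add]; congr 1; omega
      refine ⟨w / (p : ℤ) ^ i, ?_⟩
      have hmod : w % (p : ℤ) ^ i = w - (p : ℤ) ^ i * (w / (p : ℤ) ^ i) := by
        rw [Int.emod_def]
      push_cast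
      rw [htv, hmod]
      push_cast
      linear_combination (-1 : ℤ) * hwmul + (w / (p : ℤ) ^ i) * E2
    obtain ⟨c, hc⟩ := hgoal
    have : ((p ^ (k - i) * V + p ^ (ℓ - i) * ((w : ZMod (p ^ i))).val : ℕ) : ZMod (p ^ ℓ))
        = ((z.2.val : ℕ) : ZMod (p ^ ℓ)) := by
      rw [ZMod.natCast_eq_natCast_iff, Nat.modEq_iff_dvd]
      exact ⟨c, by push_cast at hc ⊢; linarith⟩
    rw [this, ZMod.natCast_val, ZMod.cast_id]

lemma decomp (ℓ k : ℕ) (hkℓ : k < ℓ) :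
    (Finset.univ.filter (fun z : ZMod (p ^ ℓ) × ZMod (p ^ ℓ) =>
        z.1 * z.2 = ((p ^ k : ℕ) : ZMod (p ^ ℓ))))
    = (Finset.range (k + 1)).biUnion (fun i =>
        Finset.image (fun ut : (ZMod (p ^ (ℓ - i)))ˣ × ZMod (p ^ i) =>
          Phi p ℓ k i ut.1 ut.2) Finset.univ) := by
  ext z
  simp only [Finset.mem_filter, Finset.mem_univ, true_and, Finset.mem_biUnion,
    Finset.mem_range, Finset.mem_image]
  constructor
  · intro hz
    obtain ⟨i, hik, u, t, hEq⟩ := phi_cover p ℓ k hkℓ z hz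
    exact ⟨i, by omega, (u, t), hEq⟩
  · rintro ⟨i, hik, ⟨u, t⟩, rfl⟩
    exact phi_mul p ℓ k i (by omega) hkℓ u t

lemma disj (ℓ k : ℕ) (hkℓ : k < ℓ) :
    (↑(Finset.range (k + 1)) : Set ℕ).PairwiseDisjoint
      (fun i => Finset.image (fun ut : (ZMod (p ^ (ℓ - i)))ˣ × ZMod (p ^ i) =>
        Phi p ℓ k i ut.1 ut.2) Finset.univ) := by
  intro i hi j hj hij
  simp only [Finset.coe_range, Set.mem_Iio] at hi hj
  refine Finset.disjoint_left.mpr ?_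
  intro z hz1 hz2
  simp only [Finset.mem_image, Finset.mem_univ, true_and] at hz1 hz2
  obtain ⟨⟨u, t⟩, h1⟩ := hz1
  obtain ⟨⟨u', t'⟩, h2⟩ := hz2
  exact phi_fst_ne p ℓ k hkℓ (by omega) (by omega) hij u t u' t' (h1.trans h2.symm)

lemma inner_eval (ℓ k i : ℕ) (hik : i ≤ k) (hkℓ : k < ℓ) (a b : ℤ) :
    ∑ ut : (ZMod (p ^ (ℓ - i)))ˣ × ZMod (p ^ i),
      eC (p ^ ℓ) (a * (((Phi p ℓ k i ut.1 ut.2).1).val : ℤ)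
        + b * (((Phi p ℓ k i ut.1 ut.2).2).val : ℤ))
    = if (p : ℤ) ^ i ∣ b then (p : ℂ) ^ i *
        (if (p : ℤ) ^ (k - i) ∣ a then (p : ℂ) ^ (k - i)
          * ∑ v : (ZMod (p ^ (ℓ - k)))ˣ,
              eC (p ^ (ℓ - k)) ((a / (p : ℤ) ^ (k - i)) * (((v : ZMod (p ^ (ℓ - k))).val : ℕ) : ℤ)
                + (b / (p : ℤ) ^ i) * ((((v⁻¹ : (ZMod (p ^ (ℓ - k)))ˣ) : ZMod (p ^ (ℓ - k))).val : ℕ) : ℤ))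
          else 0)
      else 0 := by
  have pp := hp.out
  have hp0 : p ≠ 0 := pp.ne_zero
  have hq0 : p ^ ℓ ≠ 0 := pow_ne_zero _ hp0
  -- rewrite each summand
  have hterm : ∀ (u : (ZMod (p ^ (ℓ - i)))ˣ) (t : ZMod (p ^ i)),
      eC (p ^ ℓ) (a * (((Phi p ℓ k i u t).1).val : ℤ) + b * (((Phi p ℓ k i u t).2).val : ℤ))
      = (eC (p ^ (ℓ - i)) (a * (((u : ZMod (p ^ (ℓ - i))).val : ℕ) : ℤ))
          * eC (p ^ ℓ) (b * (p : ℤ) ^ (k - i)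
              * ((((u⁻¹ : (ZMod (p ^ (ℓ - i)))ˣ) : ZMod (p ^ (ℓ - i))).val : ℕ) : ℤ)))
        * eC (p ^ i) (b * ((t.val : ℕ) : ℤ)) := by
    intro u t
    set U : ℕ := (u : ZMod (p ^ (ℓ - i))).val with hU
    set V : ℕ := ((u⁻¹ : (ZMod (p ^ (ℓ - i)))ˣ) : ZMod (p ^ (ℓ - i))).val with hV
    set T : ℕ := t.val with hT
    set N2 : ℕ := p ^ (k - i) * V + p ^ (ℓ - i) * T with hN2
    have h1 : ((Phi p ℓ k i u t).1).val = p ^ i * U := phi_fst_val p ℓ k i (by omega) u t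
    have hXeq : (((Phi p ℓ k i u t).2).val : ℤ) = ((N2 : ℕ) : ℤ) % ((p ^ ℓ : ℕ) : ℤ) := by
      simp only [hN2, Phi, ZMod.val_natCast]
      push_cast
      ring
    have hd : ((p ^ ℓ : ℕ) : ℤ) ∣ ((((Phi p ℓ k i u t).2).val : ℤ) - ((N2 : ℕ) : ℤ)) := by
      rw [hXeq]
      refine ⟨-(((N2 : ℕ) : ℤ) / ((p ^ ℓ : ℕ) : ℤ)), ?_⟩
      linear_combination Int.mul_ediv_add_emod ((N2 : ℕ) : ℤ) ((p ^ ℓ : ℕ) : ℤ)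
    have hstep : eC (p ^ ℓ) (a * (((Phi p ℓ k i u t).1).val : ℤ)
          + b * (((Phi p ℓ k i u t).2).val : ℤ))
        = eC (p ^ ℓ) (a * ((p ^ i * U : ℕ) : ℤ) + b * ((N2 : ℕ) : ℤ)) := by
      apply eC_congr _ hq0
      obtain ⟨w, hw⟩ := hd
      refine ⟨b * w, ?_⟩
      rw [h1]
      push_cast
      push_cast at hw
      linear_combination b * hw
    rw [hstep]
    have hsplit : (a * ((p ^ i * U : ℕ) : ℤ) + b * ((N2 : ℕ) : ℤ))
        = ((p : ℤ) ^ i * (a * (U : ℤ)) + (b * (p : ℤ) ^ (k - i) * (V : ℤ)))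
          + (p : ℤ) ^ (ℓ - i) * (b * (T : ℤ)) := by
      rw [hN2]
      push_cast
      ring
    rw [hsplit, eC_add, eC_add, eC_scale p hp0 (by omega : i ≤ ℓ),
      eC_scale p hp0 (by omega : ℓ - i ≤ ℓ), show ℓ - (ℓ - i) = i from by omega]
  have hsum := Fintype.sum_prod_type (fun ut : (ZMod (p ^ (ℓ - i)))ˣ × ZMod (p ^ i) =>
    eC (p ^ ℓ) (a * (((Phi p ℓ k i ut.1 ut.2).1).val : ℤ)
      + b * (((Phi p ℓ k i ut.1 ut.2).2).val : ℤ)))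
  rw [hsum]
  have hinner : ∀ u : (ZMod (p ^ (ℓ - i)))ˣ,
      ∑ t : ZMod (p ^ i), eC (p ^ ℓ) (a * (((Phi p ℓ k i u t).1).val : ℤ)
        + b * (((Phi p ℓ k i u t).2).val : ℤ))
      = (eC (p ^ (ℓ - i)) (a * (((u : ZMod (p ^ (ℓ - i))).val : ℕ) : ℤ))
          * eC (p ^ ℓ) (b * (p : ℤ) ^ (k - i)
              * ((((u⁻¹ : (ZMod (p ^ (ℓ - i)))ˣ) : ZMod (p ^ (ℓ - i))).val : ℕ) : ℤ)))
        * (if ((p ^ i : ℕ) : ℤ) ∣ b then ((p ^ i : ℕ) : ℂ) else 0) := by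
    intro u
    rw [Finset.sum_congr rfl (fun t _ => hterm u t), ← Finset.mul_sum, sum_eC]
  rw [Finset.sum_congr rfl (fun u _ => hinner u), ← Finset.sum_mul]
  have hcast : (((p ^ i : ℕ) : ℤ) ∣ b) ↔ ((p : ℤ) ^ i ∣ b) := by push_cast; rfl
  by_cases hbi : (p : ℤ) ^ i ∣ b
  · rw [if_pos (hcast.mpr hbi), if_pos hbi]
    have hb2 : (p : ℤ) ^ i * (b / (p : ℤ) ^ i) = b := Int.mul_ediv_cancel' hbi
    have hBu : ∀ u : (ZMod (p ^ (ℓ - i)))ˣ,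
        (eC (p ^ (ℓ - i)) (a * (((u : ZMod (p ^ (ℓ - i))).val : ℕ) : ℤ))
          * eC (p ^ ℓ) (b * (p : ℤ) ^ (k - i)
              * ((((u⁻¹ : (ZMod (p ^ (ℓ - i)))ˣ) : ZMod (p ^ (ℓ - i))).val : ℕ) : ℤ)))
        = eC (p ^ (ℓ - i)) (a * (((u : ZMod (p ^ (ℓ - i))).val : ℕ) : ℤ)
            + (b / (p : ℤ) ^ i) * (p : ℤ) ^ (k - i)
              * ((((u⁻¹ : (ZMod (p ^ (ℓ - i)))ˣ) : ZMod (p ^ (ℓ - i))).val : ℕ) : ℤ)) := by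
      intro u
      have harg : b * (p : ℤ) ^ (k - i)
            * ((((u⁻¹ : (ZMod (p ^ (ℓ - i)))ˣ) : ZMod (p ^ (ℓ - i))).val : ℕ) : ℤ)
          = (p : ℤ) ^ i * ((b / (p : ℤ) ^ i) * (p : ℤ) ^ (k - i)
            * ((((u⁻¹ : (ZMod (p ^ (ℓ - i)))ˣ) : ZMod (p ^ (ℓ - i))).val : ℕ) : ℤ)) := by
        linear_combination ((p : ℤ) ^ (k - i)
          * ((((u⁻¹ : (ZMod (p ^ (ℓ - i)))ˣ) : ZMod (p ^ (ℓ - i))).val : ℕ) : ℤ)) * hb2.symm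
      rw [harg, eC_scale p hp0 (by omega : i ≤ ℓ), ← eC_add]
    rw [Finset.sum_congr rfl (fun u _ => hBu u)]
    rw [unit_reduction p (ℓ - i) (k - i) (by omega) a (b / (p : ℤ) ^ i)]
    rw [show ℓ - i - (k - i) = ℓ - k from by omega]
    by_cases hai : (p : ℤ) ^ (k - i) ∣ a
    · rw [if_pos hai]
      push_cast
      ring
    · rw [if_neg hai]
      simp
  · rw [if_neg (fun hx => hbi (hcast.mp hx)), if_neg hbi]
    simp

end Main

lemma kloos_eq (c : ℕ) [NeZero c] (x y : ℤ) :
    kloos c x y = ∑ t : (ZMod c)ˣ,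
      eC c (x * (((t : ZMod c).val : ℕ) : ℤ)
        + y * ((((t⁻¹ : (ZMod c)ˣ) : ZMod c).val : ℕ) : ℤ)) := by
  rw [kloos]
  refine Finset.sum_congr rfl fun t _ => ?_
  rw [eC]
  congr 1
  push_cast
  ring

set_option maxHeartbeats 2000000 in
theorem master (p : ℕ) [hp : Fact p.Prime] (k ℓ : ℕ) (hkℓ : k < ℓ)
    (a b : ℤ) (ha : a ≠ 0) (hb : b ≠ 0) :
    klSumOne (p ^ ℓ) a b ((p : ℤ) ^ k)
      = (p : ℂ) ^ k * ∑ i ∈ Finset.Icc (k - padicValInt p a) (min (padicValInt p b) k),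
          kloos (p ^ (ℓ - k)) (a / (p : ℤ) ^ (k - i)) (b / (p : ℤ) ^ i) := by
  have pp := hp.out
  have hp0 : p ≠ 0 := pp.ne_zero
  have hq0 : p ^ ℓ ≠ 0 := pow_ne_zero _ hp0
  have hcond : ((((p : ℤ) ^ k : ℤ)) : ZMod (p ^ ℓ)) = ((p ^ k : ℕ) : ZMod (p ^ ℓ)) := by
    push_cast
    ring
  have hexp : ∀ z : ZMod (p ^ ℓ) × ZMod (p ^ ℓ),
      Complex.exp (2 * Real.pi * Complex.I
          * ((a : ℂ) * z.1.val + (b : ℂ) * z.2.val) / ((p ^ ℓ : ℕ) : ℂ))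
      = eC (p ^ ℓ) (a * (z.1.val : ℤ) + b * (z.2.val : ℤ)) := by
    intro z
    rw [eC]
    congr 1
    push_cast
    ring
  have h0 : klSumOne (p ^ ℓ) a b ((p : ℤ) ^ k)
      = ∑ z ∈ Finset.univ.filter (fun z : ZMod (p ^ ℓ) × ZMod (p ^ ℓ) =>
          z.1 * z.2 = ((p ^ k : ℕ) : ZMod (p ^ ℓ))),
        eC (p ^ ℓ) (a * (z.1.val : ℤ) + b * (z.2.val : ℤ)) := by
    calc klSumOne (p ^ ℓ) a b ((p : ℤ) ^ k)
        = ∑ x : ZMod (p ^ ℓ), ∑ x' : ZMod (p ^ ℓ),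
            (fun z : ZMod (p ^ ℓ) × ZMod (p ^ ℓ) =>
              if z.1 * z.2 = ((p ^ k : ℕ) : ZMod (p ^ ℓ)) then
                eC (p ^ ℓ) (a * (z.1.val : ℤ) + b * (z.2.val : ℤ)) else 0) (x, x') := by
          rw [klSumOne]
          refine Finset.sum_congr rfl fun x _ => Finset.sum_congr rfl fun x' _ => ?_
          simp only
          rw [hcond, hexp (x, x')]
      _ = ∑ z : ZMod (p ^ ℓ) × ZMod (p ^ ℓ),
            (if z.1 * z.2 = ((p ^ k : ℕ) : ZMod (p ^ ℓ)) then
              eC (p ^ ℓ) (a * (z.1.val : ℤ) + b * (z.2.val : ℤ)) else 0) :=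
          (Fintype.sum_prod_type (fun z : ZMod (p ^ ℓ) × ZMod (p ^ ℓ) =>
            if z.1 * z.2 = ((p ^ k : ℕ) : ZMod (p ^ ℓ)) then
              eC (p ^ ℓ) (a * (z.1.val : ℤ) + b * (z.2.val : ℤ)) else 0)).symm
      _ = ∑ z ∈ Finset.univ.filter (fun z : ZMod (p ^ ℓ) × ZMod (p ^ ℓ) =>
            z.1 * z.2 = ((p ^ k : ℕ) : ZMod (p ^ ℓ))),
          eC (p ^ ℓ) (a * (z.1.val : ℤ) + b * (z.2.val : ℤ)) :=
          (Finset.sum_filter _ _).symm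
  rw [h0, decomp p ℓ k hkℓ, Finset.sum_biUnion (disj p ℓ k hkℓ)]
  have hstep : ∀ i ∈ Finset.range (k + 1),
      (∑ z ∈ Finset.image (fun ut : (ZMod (p ^ (ℓ - i)))ˣ × ZMod (p ^ i) =>
          Phi p ℓ k i ut.1 ut.2) Finset.univ,
        eC (p ^ ℓ) (a * (z.1.val : ℤ) + b * (z.2.val : ℤ)))
      = if (k - padicValInt p a ≤ i ∧ i ≤ min (padicValInt p b) k) then
          (p : ℂ) ^ k * kloos (p ^ (ℓ - k)) (a / (p : ℤ) ^ (k - i)) (b / (p : ℤ) ^ i)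
        else 0 := by
    intro i hi
    have hik : i ≤ k := by
      simp only [Finset.mem_range] at hi
      omega
    rw [Finset.sum_image (fun x _ y _ h => phi_inj p ℓ k i hik hkℓ h)]
    have := inner_eval p ℓ k i hik hkℓ a b
    rw [this]
    have hdb : ((p : ℤ) ^ i ∣ b) ↔ i ≤ padicValInt p b := by
      rw [padicValInt_dvd_iff]
      exact or_iff_right hb
    have hda : ((p : ℤ) ^ (k - i) ∣ a) ↔ k - i ≤ padicValInt p a := by
      rw [padicValInt_dvd_iff]
      exact or_iff_right ha
    by_cases h1 : (p : ℤ) ^ i ∣ b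
    · by_cases h2 : (p : ℤ) ^ (k - i) ∣ a
      · rw [if_pos h1, if_pos h2, if_pos (by
          constructor
          · have := hda.mp h2
            omega
          · have := hdb.mp h1
            omega)]
        rw [kloos_eq]
        rw [show (p : ℂ) ^ k = (p : ℂ) ^ i * (p : ℂ) ^ (k - i) from by
          rw [← pow_add]; congr 1; omega]
        ring
      · rw [if_pos h1, if_neg h2, if_neg (by
          intro hcon
          exact h2 (hda.mpr (by omega))), mul_zero]
    · rw [if_neg h1, if_neg (by
        intro hcon
        exact h1 (hdb.mpr (by omega)))]
  rw [Finset.sum_congr rfl hstep, ← Finset.sum_filter]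
  have hfe : Finset.filter (fun i => k - padicValInt p a ≤ i ∧ i ≤ min (padicValInt p b) k)
      (Finset.range (k + 1)) = Finset.Icc (k - padicValInt p a) (min (padicValInt p b) k) := by
    ext j
    simp only [Finset.mem_filter, Finset.mem_range, Finset.mem_Icc]
    omega
  rw [hfe, Finset.mul_sum]

/-- Evaluation of `S_𝟏(a,b;p^k;p^ℓ)` for `k < ℓ` in terms of classical Kloosterman sums:
it equals `p^k ∑_{i=max(0,k−a_p)}^{min(b_p,k)} S(a/p^{k−i}, b/p^i; p^{ℓ−k})` when
`k ≤ a_p + b_p`, and vanishes otherwise. -/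
theorem klSumOne_prime_power_eval (p : ℕ) [Fact p.Prime] (k ℓ : ℕ)
    (hℓ : 1 ≤ ℓ) (hkℓ : k < ℓ) (a b : ℤ) (ha : a ≠ 0) (hb : b ≠ 0) :
    (k ≤ padicValInt p a + padicValInt p b →
      klSumOne (p ^ ℓ) a b ((p : ℤ) ^ k)
        = (p : ℂ) ^ k * ∑ i ∈ Finset.Icc (k - padicValInt p a) (min (padicValInt p b) k),
            kloos (p ^ (ℓ - k)) (a / (p : ℤ) ^ (k - i)) (b / (p : ℤ) ^ i)) ∧
    (¬ k ≤ padicValInt p a + padicValInt p b →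
      klSumOne (p ^ ℓ) a b ((p : ℤ) ^ k) = 0) := by
  constructor
  · intro _
    exact master p k ℓ hkℓ a b ha hb
  · intro h
    rw [master p k ℓ hkℓ a b ha hb]
    have hempty : Finset.Icc (k - padicValInt p a) (min (padicValInt p b) k) = ∅ :=
      Finset.Icc_eq_empty (by omega)
    rw [hempty]
    simp
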